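/- arXiv:2402.05682 — 4 statements merged into one kernel-verified Lean document; each statement's English description precedes it below -/
import Mathlib

section
/- The standard n-path ω_n = Σ_{α ∈ E_n} (-1)^{σ(α)} e_α belongs to Ω_n(I^{⊡n};ℤ); that is, its boundary ∂ω_n is again a ℤ-linear combination of strongly regular allowed elementary (n-1)-paths in I^{⊡n}. -/
/-- The boundary operator on the free ℤ-module generated by elementary paths (encoded as lists
of vertices): `∂ e_{i₀…i_n} = Σ_j (-1)^j e_{i₀…î_j…i_n}` for paths of length ≥ 1, and `∂ = 0`
on paths of length 0. -/
noncomputable def bdry (V : Type*) : (List V →₀ ℤ) →ₗ[ℤ] (List V →₀ ℤ) :=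
  Finsupp.lsum ℤ fun l => LinearMap.toSpanSingleton ℤ _
    (if 2 ≤ l.length then
      ∑ j ∈ Finset.range l.length, (-1 : ℤ) ^ j • Finsupp.single (l.eraseIdx j) (1 : ℤ)
    else 0)

/-- `u` is a ℤ-linear combination of strongly regular allowed elementary `n`-paths in the
digraph with adjacency `adj` (allowed: consecutive vertices joined by an edge; strongly
regular: all vertices pairwise distinct), i.e. `u ∈ A_n(G;ℤ)`. -/
def IsA {V : Type*} (adj : V → V → Prop) (n : ℕ) (u : List V →₀ ℤ) : Prop :=
  ∀ l ∈ u.support, l.length = n + 1 ∧ l.Chain' adj ∧ l.Nodup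

/-- `u ∈ Ω_n(G;ℤ)`: `u ∈ A_n(G;ℤ)` and `∂u ∈ A_{n-1}(G;ℤ)`. -/
def IsOmega {V : Type*} (adj : V → V → Prop) (n : ℕ) (u : List V →₀ ℤ) : Prop :=
  IsA adj n u ∧ IsA adj (n - 1) (bdry V u)
/-- The adjacency relation of the `n`-cube digraph `I^{⊡n}`: vertices are binary strings of
length `n`, with an edge `a → b` iff `b` is obtained from `a` by changing exactly one
coordinate from `0` (false) to `1` (true). -/
def cubeAdj {n : ℕ} (a b : Fin n → Bool) : Prop :=
  ∃ i, a i = false ∧ b i = true ∧ ∀ j, j ≠ i → a j = b j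

/-- The standard `n`-path `ω_n = Σ_{α ∈ E_n} (-1)^{σ(α)} e_α` in the `n`-cube `I^{⊡n}`:
allowed `n`-paths from `(0,…,0)` to `(1,…,1)` correspond to permutations `π` of the `n`
coordinates (flipping coordinate `π(k)` at step `k+1`), and the sign `(-1)^{σ(α)}` given by
the number of inversions is the sign of `π`. -/
noncomputable def stdOmega (n : ℕ) : List (Fin n → Bool) →₀ ℤ :=
  ∑ π : Equiv.Perm (Fin n),
    ((Equiv.Perm.sign π : ℤˣ) : ℤ) •
      Finsupp.single
        ((List.range (n + 1)).map fun k => fun i : Fin n => decide ((π⁻¹ i : Fin n).val < k))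
        (1 : ℤ)

namespace StdOmegaAux

variable {n : ℕ}

/-- Vertex after `k` steps along the path of `π`. -/
def gv (π : Equiv.Perm (Fin n)) (k : ℕ) : Fin n → Bool :=
  fun i : Fin n => decide ((π⁻¹ i : Fin n).val < k)

/-- The path of `π`. -/
def Lp (π : Equiv.Perm (Fin n)) : List (Fin n → Bool) :=
  (List.range (n + 1)).map (gv π)

lemma Lp_length (π : Equiv.Perm (Fin n)) : (Lp π).length = n + 1 := by
  simp [Lp]

lemma Lp_getElem (π : Equiv.Perm (Fin n)) (k : ℕ) (h : k < (Lp π).length) :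
    (Lp π)[k] = gv π k := by
  simp [Lp]

lemma gv_adj (π : Equiv.Perm (Fin n)) (m : ℕ) (hm : m < n) :
    cubeAdj (gv π m) (gv π (m + 1)) := by
  refine ⟨π ⟨m, hm⟩, ?_, ?_, ?_⟩
  · simp [gv]
  · simp [gv]
  · intro j hj
    have hne : (π⁻¹ j : Fin n).val ≠ m := by
      intro hv
      apply hj
      have : π⁻¹ j = ⟨m, hm⟩ := Fin.ext hv
      have := congrArg π this
      simpa using this
    simp only [gv]
    apply decide_eq_decide.2
    omega

lemma gv_inj (π : Equiv.Perm (Fin n)) {k k' : ℕ} (hk : k ≤ n) (hk' : k' ≤ n)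
    (h : gv π k = gv π k') : k = k' := by
  by_contra hne
  rcases Nat.lt_or_ge k k' with hlt | hge
  · have hkn : k < n := lt_of_lt_of_le hlt hk'
    have := congrFun h (π ⟨k, hkn⟩)
    simp [gv] at this
    omega
  · have hlt : k' < k := lt_of_le_of_ne hge (Ne.symm hne)
    have hkn : k' < n := lt_of_lt_of_le hlt hk
    have := congrFun h (π ⟨k', hkn⟩)
    simp [gv] at this
    omega

lemma Lp_nodup (π : Equiv.Perm (Fin n)) : (Lp π).Nodup := by
  refine List.Nodup.map_on ?_ (List.nodup_range)
  intro x hx y hy hxy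
  exact gv_inj π (by simpa using Nat.lt_succ_iff.1 (List.mem_range.1 hx))
    (by simpa using Nat.lt_succ_iff.1 (List.mem_range.1 hy)) hxy

lemma Lp_chain' (π : Equiv.Perm (Fin n)) : (Lp π).Chain' cubeAdj := by
  unfold List.Chain'
  rw [List.isChain_iff_getElem]
  intro i h
  rw [Lp_length] at h
  simp only [List.get_eq_getElem, Lp_getElem]
  exact gv_adj π i (by omega)

end StdOmegaAux

namespace StdOmegaAux

variable {n : ℕ}

lemma erase_swap (π : Equiv.Perm (Fin n)) {j : ℕ} (h1 : 1 ≤ j) (hj : j < n) :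
    (Lp (π * Equiv.swap (⟨j - 1, by omega⟩ : Fin n) ⟨j, hj⟩)).eraseIdx j
      = (Lp π).eraseIdx j := by
  set a : Fin n := ⟨j - 1, by omega⟩ with ha
  set b : Fin n := ⟨j, hj⟩ with hb
  have key : ∀ k : ℕ, k ≠ j → gv (π * Equiv.swap a b) k = gv π k := by
    intro k hk
    funext i
    simp only [gv, mul_inv_rev, Equiv.Perm.mul_apply, Equiv.swap_inv]
    apply decide_eq_decide.2
    rcases eq_or_ne (π⁻¹ i) a with hx | hxa
    · rw [hx, Equiv.swap_apply_left]
      simp only [ha, hb, hx]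
      constructor <;> intro <;> omega
    · rcases eq_or_ne (π⁻¹ i) b with hx | hxb
      · rw [hx, Equiv.swap_apply_right]
        simp only [ha, hb, hx]
        constructor <;> intro <;> omega
      · rw [Equiv.swap_apply_of_ne_of_ne hxa hxb]
  apply List.ext_getElem
  · simp [List.length_eraseIdx, Lp_length]
  intro m h1' h2'
  rw [List.getElem_eraseIdx, List.getElem_eraseIdx]
  rw [List.length_eraseIdx, Lp_length] at h1'
  split
  · rw [Lp_getElem, Lp_getElem, key m (by omega)]
  · rw [Lp_getElem, Lp_getElem, key (m + 1) (by omega)]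

noncomputable def Fj (n : ℕ) (j : ℕ) : List (Fin n → Bool) →₀ ℤ :=
  ∑ π : Equiv.Perm (Fin n),
    ((Equiv.Perm.sign π : ℤˣ) : ℤ) • Finsupp.single ((Lp π).eraseIdx j) (1 : ℤ)

lemma interior_cancel {j : ℕ} (h1 : 1 ≤ j) (hj : j < n) : Fj n j = 0 := by
  set a : Fin n := ⟨j - 1, by omega⟩ with ha
  set b : Fin n := ⟨j, hj⟩ with hb
  have hab : a ≠ b := by
    simp only [ha, hb, ne_eq, Fin.mk.injEq]
    omega
  have key : Fj n j = -Fj n j := by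
    have h := Fintype.sum_equiv (Equiv.mulRight (Equiv.swap a b))
      (fun π => -(((Equiv.Perm.sign π : ℤˣ) : ℤ) •
        Finsupp.single ((Lp π).eraseIdx j) (1 : ℤ)))
      (fun π => ((Equiv.Perm.sign π : ℤˣ) : ℤ) •
        Finsupp.single ((Lp π).eraseIdx j) (1 : ℤ)) ?_
    · rw [Finset.sum_neg_distrib] at h
      rw [Fj]
      exact h.symm
    · intro π
      simp only [Equiv.coe_mulRight]
      rw [erase_swap π h1 hj]
      have hs : ((Equiv.Perm.sign (π * Equiv.swap a b) : ℤˣ) : ℤ)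
          = -((Equiv.Perm.sign π : ℤˣ) : ℤ) := by
        rw [Equiv.Perm.sign_mul, Equiv.Perm.sign_swap hab]
        simp
      rw [hs, neg_smul]
  ext l
  have h2 := DFunLike.congr_fun key l
  rw [Finsupp.neg_apply] at h2
  simp only [Finsupp.coe_zero, Pi.zero_apply]
  omega

lemma Fj_support {j : ℕ} {l : List (Fin n → Bool)} (hl : l ∈ (Fj n j).support) :
    ∃ π : Equiv.Perm (Fin n), l = (Lp π).eraseIdx j := by
  have h := Finsupp.support_finset_sum hl
  obtain ⟨π, -, hπ⟩ := Finset.mem_biUnion.1 h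
  have h2 := Finsupp.support_smul hπ
  have h3 := Finsupp.support_single_subset h2
  exact ⟨π, Finset.mem_singleton.1 h3⟩

lemma erase_chain' (π : Equiv.Perm (Fin n)) {j : ℕ} (hj : j = 0 ∨ j = n) :
    ((Lp π).eraseIdx j).Chain' cubeAdj := by
  unfold List.Chain'
  rw [List.isChain_iff_getElem]
  intro i h
  have hlen : ((Lp π).eraseIdx j).length = n := by
    rw [List.length_eraseIdx, Lp_length]
    rcases hj with rfl | rfl <;> simp
  rw [hlen] at h
  rw [List.getElem_eraseIdx, List.getElem_eraseIdx]
  rcases hj with rfl | rfl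
  · rw [dif_neg (by omega), dif_neg (by omega), Lp_getElem, Lp_getElem]
    exact gv_adj π (i + 1) (by omega)
  · rw [dif_pos (by omega), dif_pos (by omega), Lp_getElem, Lp_getElem]
    exact gv_adj π i (by omega)

end StdOmegaAux

namespace StdOmegaAux

lemma bdry_single {V : Type*} (l : List V) :
    bdry V (Finsupp.single l 1) =
      if 2 ≤ l.length then
        ∑ j ∈ Finset.range l.length, (-1 : ℤ) ^ j • Finsupp.single (l.eraseIdx j) (1 : ℤ)
      else 0 := by
  rw [bdry, Finsupp.lsum_single]
  simp [LinearMap.toSpanSingleton_apply]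

lemma stdOmega_eq (n : ℕ) :
    stdOmega n = ∑ π : Equiv.Perm (Fin n),
      ((Equiv.Perm.sign π : ℤˣ) : ℤ) • Finsupp.single (Lp π) (1 : ℤ) := rfl

end StdOmegaAux

open StdOmegaAux

/-- `ω_n ∈ Ω_n(I^{⊡n};ℤ)`: the standard `n`-path is a combination of strongly regular allowed
elementary `n`-paths, and its boundary `∂ω_n` is again a ℤ-linear combination of strongly
regular allowed elementary `(n-1)`-paths in `I^{⊡n}`. -/
theorem stdOmega_mem_omega (n : ℕ) :
    IsA cubeAdj n (stdOmega n) ∧ IsA cubeAdj (n - 1) (bdry (Fin n → Bool) (stdOmega n)) := by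
  constructor
  · intro l hl
    rw [stdOmega_eq] at hl
    have h := Finsupp.support_finset_sum hl
    obtain ⟨π, -, hπ⟩ := Finset.mem_biUnion.1 h
    have h3 := Finsupp.support_single_subset (Finsupp.support_smul hπ)
    obtain rfl := Finset.mem_singleton.1 h3
    exact ⟨Lp_length π, Lp_chain' π, Lp_nodup π⟩
  · rcases Nat.eq_zero_or_pos n with rfl | hn
    · intro l hl
      have hz : bdry (Fin 0 → Bool) (stdOmega 0) = 0 := by
        rw [stdOmega_eq, map_sum]
        apply Finset.sum_eq_zero
        intro π _
        rw [map_smul, bdry_single, if_neg (by rw [Lp_length]; omega), smul_zero]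
      rw [hz] at hl
      simp at hl
    · have hcomp : bdry (Fin n → Bool) (stdOmega n)
          = Fj n 0 + (-1 : ℤ) ^ n • Fj n n := by
        rw [stdOmega_eq, map_sum]
        have step1 : ∀ π : Equiv.Perm (Fin n),
            bdry _ (((Equiv.Perm.sign π : ℤˣ) : ℤ) • Finsupp.single (Lp π) (1 : ℤ))
            = ∑ j ∈ Finset.range (n + 1), ((Equiv.Perm.sign π : ℤˣ) : ℤ) •
                ((-1 : ℤ) ^ j • Finsupp.single ((Lp π).eraseIdx j) (1 : ℤ)) := by
          intro π
          rw [map_smul, bdry_single, if_pos (by rw [Lp_length]; omega), Lp_length,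
            Finset.smul_sum]
        rw [Finset.sum_congr rfl (fun π _ => step1 π), Finset.sum_comm]
        have step2 : ∀ j, (∑ π : Equiv.Perm (Fin n), ((Equiv.Perm.sign π : ℤˣ) : ℤ) •
              ((-1 : ℤ) ^ j • Finsupp.single ((Lp π).eraseIdx j) (1 : ℤ)))
            = (-1 : ℤ) ^ j • Fj n j := by
          intro j
          rw [Fj, Finset.smul_sum]
          exact Finset.sum_congr rfl (fun π _ => smul_comm _ _ _)
        rw [Finset.sum_congr rfl (fun j _ => step2 j)]
        rw [Finset.sum_range_succ, Finset.range_eq_Ico, Finset.sum_eq_sum_Ico_succ_bot hn]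
        have hzero : ∑ j ∈ Finset.Ico 1 n, (-1 : ℤ) ^ j • Fj n j = 0 := by
          apply Finset.sum_eq_zero
          intro j hj
          obtain ⟨h1, h2⟩ := Finset.mem_Ico.1 hj
          rw [interior_cancel h1 h2, smul_zero]
        rw [hzero, add_zero, pow_zero, one_smul]
      intro l hl
      rw [hcomp] at hl
      have hmem := Finset.mem_union.1 (Finsupp.support_add hl)
      have hex : ∃ π : Equiv.Perm (Fin n), ∃ j, (j = 0 ∨ j = n) ∧ l = (Lp π).eraseIdx j := by
        rcases hmem with h | h
        · obtain ⟨π, hπ⟩ := Fj_support h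
          exact ⟨π, 0, Or.inl rfl, hπ⟩
        · obtain ⟨π, hπ⟩ := Fj_support (Finsupp.support_smul h)
          exact ⟨π, n, Or.inr rfl, hπ⟩
      obtain ⟨π, j, hj, rfl⟩ := hex
      refine ⟨?_, erase_chain' π hj,
        List.Nodup.sublist (List.eraseIdx_sublist _ _) (Lp_nodup π)⟩
      rw [List.length_eraseIdx, Lp_length,
        if_pos (by rcases hj with rfl | rfl <;> omega)]
      omega
end

section
/- If H is an acyclic digraph and f: G → H is a digraph map, then the induced linear map f_* (sending e_{i_0…i_k} to e_{f(i_0)…f(i_k)} when all f(i_j) are distinct and to 0 otherwise) restricts to a chain map f_*: Ω_*(G;ℤ) → Ω_*(H;ℤ), i.e. ∂ f_* = f_* ∂ on Ω_*(G;ℤ). -/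
/-- `f` is a digraph map: every edge `v → w` satisfies `f v → f w` or `f v = f w`. -/
def IsDigraphMap {V W : Type*} (adjV : V → V → Prop) (adjW : W → W → Prop)
    (f : V → W) : Prop :=
  ∀ a b, adjV a b → adjW (f a) (f b) ∨ f a = f b

/-- A digraph is acyclic if it contains no directed cycle `v₀ → v₁ → ⋯ → v_n → v₀`. -/
def Acyclic {V : Type*} (adj : V → V → Prop) : Prop :=
  ¬ ∃ (n : ℕ) (v : Fin (n + 1) → V),
      (∀ i : Fin n, adj (v i.castSucc) (v i.succ)) ∧ adj (v (Fin.last n)) (v 0)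

open Classical

/-- The push-forward `f_*`: the ℤ-linear map sending an elementary path `e_{i₀…i_k}` to
`e_{f(i₀)…f(i_k)}` when all the `f(i_j)` are pairwise distinct, and to `0` otherwise. -/
noncomputable def fstar {V W : Type*} (f : V → W) : (List V →₀ ℤ) →ₗ[ℤ] (List W →₀ ℤ) :=
  Finsupp.lsum ℤ fun l => LinearMap.toSpanSingleton ℤ _
    (if (l.map f).Nodup then Finsupp.single (l.map f) (1 : ℤ) else 0)

/-! ### Auxiliary lemmas -/

lemma bdry_single {V : Type*} (l : List V) (c : ℤ) :
    bdry V (Finsupp.single l c) =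
      c • (if 2 ≤ l.length then
        ∑ j ∈ Finset.range l.length, (-1:ℤ)^j • Finsupp.single (l.eraseIdx j) (1:ℤ) else 0) := by
  simp [bdry, Finsupp.lsum_single, LinearMap.toSpanSingleton_apply]

lemma fstar_single {V W : Type*} (f : V → W) (l : List V) (c : ℤ) :
    fstar f (Finsupp.single l c) =
      c • (if (l.map f).Nodup then Finsupp.single (l.map f) (1:ℤ) else 0) := by
  simp [fstar, Finsupp.lsum_single, LinearMap.toSpanSingleton_apply]

lemma chain'_nodup_of_acyclic {W : Type*} {adj : W → W → Prop} (h : Acyclic adj)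
    {m : List W} (hm : m.Chain' adj) : m.Nodup := by
  simp only [List.Chain', List.isChain_iff_getElem] at hm
  replace hm : ∀ (i : ℕ) (h : i < m.length - 1), adj (m.get ⟨i, by omega⟩) (m.get ⟨i + 1, by omega⟩) :=
    fun i h => hm i (by omega)
  rw [List.nodup_iff_injective_get]
  intro i j hij
  by_contra hne
  have hne' : (i : ℕ) ≠ (j : ℕ) := fun h' => hne (Fin.ext h')
  rcases Nat.lt_or_ge (i:ℕ) (j:ℕ) with hlt | hge
  · exact h ⟨(j:ℕ) - (i:ℕ) - 1, fun k => m.get ⟨(i:ℕ) + (k:ℕ), by omega⟩,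
      fun k => by
        have := hm ((i:ℕ) + (k:ℕ)) (by have := k.isLt; have := j.isLt; omega)
        simpa [Nat.add_assoc] using this,
      by
        have hj1 : (j:ℕ) - 1 + 1 = (j:ℕ) := by omega
        have := hm ((j:ℕ) - 1) (by have := j.isLt; omega)
        have h2 : m.get ⟨(j:ℕ)-1+1, by omega⟩ = m.get i := by
          have he : (⟨(j:ℕ)-1+1, by omega⟩ : Fin m.length) = j := Fin.ext (by simp [hj1])
          rw [he, ← hij]
        rw [h2] at this
        convert this using 2
        exact Fin.ext (by simp [Fin.last]; omega)
        exact Fin.ext (by simp)⟩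
  · have hlt : (j:ℕ) < (i:ℕ) := by omega
    exact h ⟨(i:ℕ) - (j:ℕ) - 1, fun k => m.get ⟨(j:ℕ) + (k:ℕ), by omega⟩,
      fun k => by
        have := hm ((j:ℕ) + (k:ℕ)) (by have := k.isLt; have := i.isLt; omega)
        simpa [Nat.add_assoc] using this,
      by
        have hj1 : (i:ℕ) - 1 + 1 = (i:ℕ) := by omega
        have := hm ((i:ℕ) - 1) (by have := i.isLt; omega)
        have h2 : m.get ⟨(i:ℕ)-1+1, by omega⟩ = m.get j := by
          have he : (⟨(i:ℕ)-1+1, by omega⟩ : Fin m.length) = i := Fin.ext (by simp [hj1])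
          rw [he, hij]
        rw [h2] at this
        convert this using 2
        exact Fin.ext (by simp [Fin.last]; omega)
        exact Fin.ext (by simp)⟩

lemma map_eraseIdx' {V W : Type*} (f : V → W) :
    ∀ (l : List V) (j : ℕ), (l.eraseIdx j).map f = (l.map f).eraseIdx j
  | [], _ => by simp
  | _ :: _, 0 => by simp
  | a :: l, j+1 => by simp [map_eraseIdx' f l j]

lemma exists_consec {W : Type*} {adj : W → W → Prop} (h : Acyclic adj) {m : List W}
    (hm : m.Chain' (fun a b => adj a b ∨ a = b)) (hnd : ¬ m.Nodup) :
    ∃ k, ∃ (h : k + 1 < m.length), m.get ⟨k, by omega⟩ = m.get ⟨k+1, h⟩ := by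
  by_contra hc
  push_neg at hc
  apply hnd
  apply chain'_nodup_of_acyclic h
  simp only [List.Chain', List.isChain_iff_getElem] at hm ⊢
  intro i hi
  rcases hm i hi with h1 | h1
  · exact h1
  · exact absurd h1 (hc i (by omega))

lemma eraseIdx_eq_of_consec {W : Type*} {m : List W} {k : ℕ} (hk : k + 1 < m.length)
    (heq : m.get ⟨k, by omega⟩ = m.get ⟨k+1, by omega⟩) :
    m.eraseIdx k = m.eraseIdx (k+1) := by
  apply List.ext_getElem
  · rw [List.length_eraseIdx_of_lt (by omega), List.length_eraseIdx_of_lt (by omega)]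
  · intro i h1 h2
    rw [List.getElem_eraseIdx, List.getElem_eraseIdx]
    rcases Nat.lt_trichotomy i k with h | h | h
    · rw [dif_pos h, dif_pos (by omega)]
    · subst h
      rw [dif_neg (by omega), dif_pos (by omega)]
      simpa [List.get_eq_getElem] using heq.symm
    · rw [dif_neg (by omega), dif_neg (by omega)]

lemma not_nodup_eraseIdx {W : Type*} {m : List W} {k j : ℕ} (hk : k + 1 < m.length)
    (heq : m.get ⟨k, by omega⟩ = m.get ⟨k+1, by omega⟩)
    (hj1 : j ≠ k) (hj2 : j ≠ k + 1) : ¬ (m.eraseIdx j).Nodup := by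
  intro hnd
  simp only [List.get_eq_getElem] at heq
  rcases Nat.lt_or_ge j k with h | h
  · have hl : (m.eraseIdx j).length = m.length - 1 := List.length_eraseIdx_of_lt (by omega)
    have e1 : (m.eraseIdx j)[k-1]'(by omega) = m[k]'(by omega) := by
      rw [List.getElem_eraseIdx, dif_neg (by omega)]
      congr 1; omega
    have e2 : (m.eraseIdx j)[k]'(by omega) = m[k+1]'(by omega) := by
      rw [List.getElem_eraseIdx, dif_neg (by omega)]
    have := (hnd.getElem_inj_iff).mp (e1.trans (heq.trans e2.symm))
    omega
  · have h' : k + 1 < j := by omega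
    have hl : (m.eraseIdx j).length ≤ m.length := List.length_eraseIdx_le m j
    have hkl : k + 1 < (m.eraseIdx j).length := by
      rcases Nat.lt_or_ge j m.length with hj | hj
      · rw [List.length_eraseIdx_of_lt hj]; omega
      · rw [List.eraseIdx_of_length_le (by omega)]; omega
    have e1 : (m.eraseIdx j)[k]'(by omega) = m[k]'(by omega) := by
      rw [List.getElem_eraseIdx, dif_pos (by omega)]
    have e2 : (m.eraseIdx j)[k+1]'(by omega) = m[k+1]'(by omega) := by
      rw [List.getElem_eraseIdx, dif_pos (by omega)]
    have := (hnd.getElem_inj_iff).mp (e1.trans (heq.trans e2.symm))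
    omega

lemma sum_cancel {W : Type*} {m : List W} {k : ℕ} (hk : k + 1 < m.length)
    (heq : m.get ⟨k, by omega⟩ = m.get ⟨k+1, hk⟩) :
    ∑ j ∈ Finset.range m.length, (-1:ℤ)^j •
      (if (m.eraseIdx j).Nodup then Finsupp.single (m.eraseIdx j) (1:ℤ) else 0) = 0 := by
  rw [Finset.sum_eq_add_of_mem k (k+1) (Finset.mem_range.mpr (by omega))
      (Finset.mem_range.mpr hk) (by omega)
      (fun c _ hc => by
        rw [if_neg (not_nodup_eraseIdx hk heq hc.1 hc.2), smul_zero])]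
  rw [eraseIdx_eq_of_consec hk heq]
  rcases Classical.em (m.eraseIdx (k+1)).Nodup with h | h
  · rw [if_pos h, pow_succ]
    module
  · rw [if_neg h, smul_zero, smul_zero, add_zero]

lemma chain'_or_map {V W : Type*} {adjV : V → V → Prop} {adjW : W → W → Prop} {f : V → W}
    (hf : IsDigraphMap adjV adjW f) {l : List V} (hl : l.Chain' adjV) :
    (l.map f).Chain' (fun a b => adjW a b ∨ a = b) :=
  (List.isChain_map f).mpr (List.IsChain.imp (fun a b h => hf a b h) hl)

lemma chain'_of_nodup {W : Type*} {adj : W → W → Prop} {m : List W}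
    (hm : m.Chain' (fun a b => adj a b ∨ a = b)) (hnd : m.Nodup) : m.Chain' adj := by
  simp only [List.Chain', List.isChain_iff_getElem] at hm ⊢
  intro i hi
  rcases hm i hi with h | h
  · exact h
  · have h2 := List.nodup_iff_injective_get.mp hnd h
    have h3 : i = i + 1 := congrArg Fin.val h2
    omega

lemma key_lemma {V W : Type*} {adjV : V → V → Prop} {adjW : W → W → Prop}
    (hW : Acyclic adjW) {f : V → W} (hf : IsDigraphMap adjV adjW f)
    {l : List V} (hl : l.Chain' adjV) :
    bdry W (fstar f (Finsupp.single l (1:ℤ))) = fstar f (bdry V (Finsupp.single l (1:ℤ))) := by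
  rw [fstar_single, bdry_single, one_smul, one_smul]
  by_cases hlen : 2 ≤ l.length
  · rw [if_pos hlen]
    by_cases hnd : (l.map f).Nodup
    · rw [if_pos hnd, bdry_single, one_smul,
        if_pos (by simpa using hlen), map_sum, List.length_map]
      refine Finset.sum_congr rfl (fun j _ => ?_)
      rw [LinearMap.map_smul, fstar_single, map_eraseIdx',
        if_pos (hnd.sublist (List.eraseIdx_sublist _ j)), one_smul]
    · rw [if_neg hnd, map_zero, map_sum]
      obtain ⟨k, hk, heq⟩ := exists_consec hW (chain'_or_map hf hl) hnd
      have hs := sum_cancel hk heq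
      rw [List.length_map] at hs
      refine ((Finset.sum_congr rfl (fun j _ => ?_)).trans hs).symm
      rw [LinearMap.map_smul, fstar_single, one_smul, map_eraseIdx']
  · rw [if_neg hlen, map_zero]
    split_ifs with h
    · rw [bdry_single, if_neg (by simpa using hlen), smul_zero]
    · rw [map_zero]

lemma fstar_rep {V W : Type*} (f : V → W) (u : List V →₀ ℤ) :
    fstar f u = u.sum fun l c =>
      c • (if (l.map f).Nodup then Finsupp.single (l.map f) (1:ℤ) else 0) := by
  conv_lhs => rw [← Finsupp.sum_single u, map_finsuppSum]
  exact Finsupp.sum_congr fun l _ => fstar_single f l (u l)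

lemma support_fstar {V W : Type*} (f : V → W) (u : List V →₀ ℤ) :
    ∀ m ∈ (fstar f u).support, ∃ l ∈ u.support, m = l.map f ∧ (l.map f).Nodup := by
  intro m hm
  rw [fstar_rep] at hm
  obtain ⟨l, hl, hm'⟩ := Finset.mem_biUnion.mp (Finsupp.support_sum hm)
  by_cases hnd : (l.map f).Nodup
  · rw [if_pos hnd] at hm'
    have h1 := Finsupp.support_smul hm'
    have h2 := Finsupp.support_single_subset h1
    exact ⟨l, hl, Finset.mem_singleton.mp h2, hnd⟩
  · rw [if_neg hnd, smul_zero] at hm'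
    simp at hm'

lemma isA_fstar {V W : Type*} {adjV : V → V → Prop} {adjW : W → W → Prop}
    {f : V → W} (hf : IsDigraphMap adjV adjW f) (k : ℕ) (u : List V →₀ ℤ)
    (hu : IsA adjV k u) : IsA adjW k (fstar f u) := by
  intro m hm
  obtain ⟨l, hl, rfl, hnd⟩ := support_fstar f u m hm
  obtain ⟨hlen, hch, -⟩ := hu l hl
  exact ⟨by simpa using hlen, chain'_of_nodup (chain'_or_map hf hch) hnd, hnd⟩

lemma comm_of_chain {V W : Type*} {adjV : V → V → Prop} {adjW : W → W → Prop}
    (hW : Acyclic adjW) {f : V → W} (hf : IsDigraphMap adjV adjW f)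
    (u : List V →₀ ℤ) (hch : ∀ l ∈ u.support, l.Chain' adjV) :
    bdry W (fstar f u) = fstar f (bdry V u) := by
  conv_lhs => rw [← Finsupp.sum_single u, map_finsuppSum, map_finsuppSum]
  conv_rhs => rw [← Finsupp.sum_single u, map_finsuppSum, map_finsuppSum]
  refine Finsupp.sum_congr fun l hl => ?_
  have h1 : Finsupp.single l (u l) = (u l) • Finsupp.single l (1:ℤ) := by
    rw [Finsupp.smul_single, smul_eq_mul, mul_one]
  rw [h1, LinearMap.map_smul, LinearMap.map_smul, LinearMap.map_smul, LinearMap.map_smul,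
    key_lemma hW hf (hch l hl)]

/-- If `H` is acyclic and `f : G → H` is a digraph map, then `f_*` restricts to a chain map
`Ω_*(G;ℤ) → Ω_*(H;ℤ)`: for `u ∈ Ω_n(G;ℤ)`, `f_* u ∈ Ω_n(H;ℤ)` and `∂ (f_* u) = f_* (∂ u)`. -/
theorem fstar_chain_map {V W : Type*} (adjV : V → V → Prop) (adjW : W → W → Prop)
    (hW : Acyclic adjW) (f : V → W) (hf : IsDigraphMap adjV adjW f)
    (n : ℕ) (u : List V →₀ ℤ) (hu : IsOmega adjV n u) :
    IsOmega adjW n (fstar f u) ∧ bdry W (fstar f u) = fstar f (bdry V u) := by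
  obtain ⟨hA, hB⟩ := hu
  have hcomm : bdry W (fstar f u) = fstar f (bdry V u) :=
    comm_of_chain hW hf u (fun l hl => (hA l hl).2.1)
  refine ⟨⟨isA_fstar hf n u hA, ?_⟩, hcomm⟩
  rw [hcomm]
  exact isA_fstar hf (n-1) (bdry V u) hB
end

section
/- Let S_k (k ≥ 3) be the digraph with vertices {S, E, 1,…,k} and edges S → i and i → E for i = 1,…,k. Then the real path homology of S_k is H_0(S_k;ℝ) ≅ ℝ and H_n(S_k;ℝ) = 0 for all n ≥ 1. -/
/-- The boundary operator on the free ℝ-vector space generated by elementary paths (encoded as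
lists of vertices): `∂ e_{i₀…i_n} = Σ_j (-1)^j e_{i₀…î_j…i_n}` for paths of length ≥ 1, and
`∂ = 0` on paths of length 0. -/
noncomputable def bdryR (V : Type*) : (List V →₀ ℝ) →ₗ[ℝ] (List V →₀ ℝ) :=
  Finsupp.lsum ℝ fun l => LinearMap.toSpanSingleton ℝ _
    (if 2 ≤ l.length then
      ∑ j ∈ Finset.range l.length, (-1 : ℝ) ^ j • Finsupp.single (l.eraseIdx j) (1 : ℝ)
    else 0)

/-- `u` is an ℝ-linear combination of strongly regular allowed elementary `n`-paths in the
digraph with adjacency `adj`, i.e. `u ∈ A_n(G;ℝ)`. -/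
def IsAR {V : Type*} (adj : V → V → Prop) (n : ℕ) (u : List V →₀ ℝ) : Prop :=
  ∀ l ∈ u.support, l.length = n + 1 ∧ l.Chain' adj ∧ l.Nodup

/-- `u ∈ Ω_n(G;ℝ)`: `u ∈ A_n(G;ℝ)` and `∂u ∈ A_{n-1}(G;ℝ)`. -/
def IsOmegaR {V : Type*} (adj : V → V → Prop) (n : ℕ) (u : List V →₀ ℝ) : Prop :=
  IsAR adj n u ∧ IsAR adj (n - 1) (bdryR V u)

/-- The digraph `S_k`: vertices `S = inl false`, `E = inl true` and `1,…,k` (`inr i`), with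
edges `S → i` and `i → E` for every `i`. -/
def skAdj (k : ℕ) : (Bool ⊕ Fin k) → (Bool ⊕ Fin k) → Prop := fun a b =>
  (a = Sum.inl false ∧ ∃ i, b = Sum.inr i) ∨ ((∃ i, a = Sum.inr i) ∧ b = Sum.inl true)

namespace SK

noncomputable def D (V : Type*) (l : List V) : List V →₀ ℝ :=
  if 2 ≤ l.length then ∑ j ∈ Finset.range l.length, (-1 : ℝ) ^ j • Finsupp.single (l.eraseIdx j) (1:ℝ) else 0

lemma bdry_eq {V : Type*} (u : List V →₀ ℝ) : bdryR V u = u.sum fun l c => c • D V l := by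
  rw [bdryR, Finsupp.lsum_apply]
  exact Finsupp.sum_congr fun l _ => by rw [LinearMap.toSpanSingleton_apply]; rfl

lemma bdry_single {V : Type*} (l : List V) (c : ℝ) :
    bdryR V (Finsupp.single l c) = c • D V l := by
  rw [bdry_eq]
  exact Finsupp.sum_single_index (zero_smul _ _)

lemma D_one {V : Type*} (a : V) : D V [a] = 0 := by simp [D]

lemma D_two {V : Type*} (a b : V) : D V [a,b] = Finsupp.single [b] 1 - Finsupp.single [a] 1 := by
  simp [D, Finset.sum_range_succ]; abel

lemma D_three {V : Type*} (a b d : V) :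
    D V [a,b,d] = Finsupp.single [b,d] 1 - Finsupp.single [a,d] 1 + Finsupp.single [a,b] 1 := by
  simp [D, Finset.sum_range_succ, pow_succ]; abel

variable {k : ℕ}

abbrev S (k : ℕ) : Bool ⊕ Fin k := Sum.inl false
abbrev E (k : ℕ) : Bool ⊕ Fin k := Sum.inl true

lemma chain2 {l : List (Bool ⊕ Fin k)} (h : l.length = 2) (hc : l.Chain' (skAdj k)) :
    (∃ i, l = [S k, Sum.inr i]) ∨ (∃ i, l = [Sum.inr i, E k]) := by
  match l, h with
  | [a, b], _ =>
    have hab : skAdj k a b := List.isChain_pair.mp hc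
    rcases hab with ⟨rfl, i, rfl⟩ | ⟨⟨i, rfl⟩, rfl⟩
    · exact Or.inl ⟨i, rfl⟩
    · exact Or.inr ⟨i, rfl⟩

lemma chain3 {l : List (Bool ⊕ Fin k)} (h : l.length = 3) (hc : l.Chain' (skAdj k)) :
    ∃ i, l = [S k, Sum.inr i, E k] := by
  match l, h with
  | [a, b, d], _ =>
    have hab : skAdj k a b := (List.isChain_cons_cons.mp hc).1
    have hbd : skAdj k b d := by
      have := (List.isChain_cons_cons.mp hc).2
      exact List.isChain_pair.mp this
    rcases hab with ⟨rfl, i, rfl⟩ | ⟨⟨i, rfl⟩, rfl⟩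
    · rcases hbd with ⟨h1, _⟩ | ⟨_, rfl⟩
      · simp at h1
      · exact ⟨i, rfl⟩
    · rcases hbd with ⟨h1, _⟩ | ⟨⟨j, hj⟩, _⟩
      · simp at h1
      · simp at hj

lemma chain_big {l : List (Bool ⊕ Fin k)} (h : 4 ≤ l.length) (hc : l.Chain' (skAdj k)) :
    False := by
  match l, h with
  | a :: b :: d :: e :: t, _ =>
    have hab : skAdj k a b := (List.isChain_cons_cons.mp hc).1
    have hc2 := (List.isChain_cons_cons.mp hc).2
    have hbd : skAdj k b d := (List.isChain_cons_cons.mp hc2).1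
    have hc3 := (List.isChain_cons_cons.mp hc2).2
    have hde : skAdj k d e := (List.isChain_cons_cons.mp hc3).1
    rcases hbd with ⟨rfl, _⟩ | ⟨_, rfl⟩
    · rcases hab with ⟨_, i, hi⟩ | ⟨_, h1⟩ <;> simp_all
    · rcases hde with ⟨h1, _⟩ | ⟨⟨j, hj⟩, _⟩ <;> simp_all

lemma isAR_zero {V : Type*} (adj : V → V → Prop) (n : ℕ) : IsAR adj n (0 : List V →₀ ℝ) := by
  intro l hl; simp at hl

lemma IsAR.sub {V : Type*} {adj : V → V → Prop} {n : ℕ} {u w : List V →₀ ℝ}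
    (h1 : IsAR adj n u) (h2 : IsAR adj n w) : IsAR adj n (u - w) := by
  classical
  intro l hl
  rcases Finset.mem_union.mp (Finsupp.support_sub hl) with h | h
  · exact h1 l h
  · exact h2 l h

lemma IsAR.smul {V : Type*} {adj : V → V → Prop} {n : ℕ} {u : List V →₀ ℝ} (c : ℝ)
    (h1 : IsAR adj n u) : IsAR adj n (c • u) := by
  intro l hl
  exact h1 l (Finsupp.support_smul hl)


lemma repr0 (u : List (Bool ⊕ Fin k) →₀ ℝ) (hu : IsAR (skAdj k) 0 u) :
    u = Finsupp.single [S k] (u [S k]) + Finsupp.single [E k] (u [E k])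
      + ∑ i : Fin k, Finsupp.single [Sum.inr i] (u [Sum.inr i]) := by
  classical
  ext l
  rw [Finsupp.add_apply, Finsupp.add_apply, Finsupp.finset_sum_apply]
  by_cases hS : l = [S k]
  · subst hS; simp [Finsupp.single_apply, Finset.sum_ite_eq']
  by_cases hE : l = [E k]
  · subst hE; simp [Finsupp.single_apply, Finset.sum_ite_eq']
  by_cases hI : ∃ i, l = [Sum.inr i]
  · obtain ⟨i, rfl⟩ := hI; simp [Finsupp.single_apply, Finset.sum_ite_eq']
  · have hns : l ∉ u.support := by
      intro hl
      obtain ⟨x, rfl⟩ := List.length_eq_one_iff.mp (hu l hl).1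
      rcases x with b | i
      · cases b
        · exact hS rfl
        · exact hE rfl
      · exact hI ⟨i, rfl⟩
    rw [Finsupp.notMem_support_iff.mp hns]
    rw [Finsupp.single_apply, if_neg (fun h => hS h.symm),
        Finsupp.single_apply, if_neg (fun h => hE h.symm)]
    rw [Finset.sum_eq_zero fun j _ => by
      rw [Finsupp.single_apply, if_neg (fun h => hI ⟨j, h.symm⟩)]]
    ring

lemma repr1 (u : List (Bool ⊕ Fin k) →₀ ℝ) (hu : IsAR (skAdj k) 1 u) :
    u = ∑ i : Fin k, (Finsupp.single [S k, Sum.inr i] (u [S k, Sum.inr i])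
      + Finsupp.single [Sum.inr i, E k] (u [Sum.inr i, E k])) := by
  classical
  ext l
  rw [Finsupp.finset_sum_apply]
  by_cases h1 : ∃ i, l = [S k, Sum.inr i]
  · obtain ⟨i, rfl⟩ := h1
    simp [Finsupp.single_apply, Finsupp.add_apply, Finset.sum_ite_eq']
  by_cases h2 : ∃ i, l = [Sum.inr i, E k]
  · obtain ⟨i, rfl⟩ := h2
    simp [Finsupp.single_apply, Finsupp.add_apply, Finset.sum_ite_eq']
  · have hns : l ∉ u.support := by
      intro hl
      rcases chain2 (hu l hl).1 (hu l hl).2.1 with ⟨i, rfl⟩ | ⟨i, rfl⟩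
      · exact h1 ⟨i, rfl⟩
      · exact h2 ⟨i, rfl⟩
    rw [Finsupp.notMem_support_iff.mp hns]
    symm
    apply Finset.sum_eq_zero
    intro j _
    rw [Finsupp.add_apply, Finsupp.single_apply, if_neg (fun h => h1 ⟨j, h.symm⟩),
        Finsupp.single_apply, if_neg (fun h => h2 ⟨j, h.symm⟩), add_zero]

lemma repr2 (u : List (Bool ⊕ Fin k) →₀ ℝ) (hu : IsAR (skAdj k) 2 u) :
    u = ∑ i : Fin k, Finsupp.single [S k, Sum.inr i, E k] (u [S k, Sum.inr i, E k]) := by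
  classical
  ext l
  rw [Finsupp.finset_sum_apply]
  by_cases h1 : ∃ i, l = [S k, Sum.inr i, E k]
  · obtain ⟨i, rfl⟩ := h1
    simp [Finsupp.single_apply, Finset.sum_ite_eq']
  · have hns : l ∉ u.support := by
      intro hl
      obtain ⟨i, rfl⟩ := chain3 (hu l hl).1 (hu l hl).2.1
      exact h1 ⟨i, rfl⟩
    rw [Finsupp.notMem_support_iff.mp hns]
    symm
    apply Finset.sum_eq_zero
    intro j _
    rw [Finsupp.single_apply, if_neg (fun h => h1 ⟨j, h.symm⟩)]


noncomputable def eps (V : Type*) : (List V →₀ ℝ) →ₗ[ℝ] ℝ :=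
  Finsupp.lsum ℝ fun _ => LinearMap.id

lemma eps_single {V : Type*} (l : List V) (c : ℝ) : eps V (Finsupp.single l c) = c := by
  rw [eps, Finsupp.lsum_apply]
  exact Finsupp.sum_single_index rfl

lemma part_H1 (u : List (Bool ⊕ Fin k) →₀ ℝ) (hu : IsOmegaR (skAdj k) 1 u)
    (hc : bdryR _ u = 0) : ∃ v, IsOmegaR (skAdj k) 2 v ∧ bdryR _ v = u := by
  classical
  set a : Fin k → ℝ := fun i => u [S k, Sum.inr i] with ha
  set b : Fin k → ℝ := fun i => u [Sum.inr i, E k] with hb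
  have hrepr : u = ∑ i : Fin k, (Finsupp.single [S k, Sum.inr i] (a i)
      + Finsupp.single [Sum.inr i, E k] (b i)) := repr1 u hu.1
  have hbu : bdryR _ u = ∑ i : Fin k,
      (a i • (Finsupp.single [Sum.inr i] 1 - Finsupp.single [S k] 1)
      + b i • (Finsupp.single [E k] 1 - Finsupp.single [Sum.inr i] 1)) := by
    conv_lhs => rw [hrepr]
    rw [map_sum]
    exact Finset.sum_congr rfl fun i _ => by
      rw [map_add, bdry_single, bdry_single, D_two, D_two]
  have hab : ∀ i, b i = a i := by
    intro i
    have h0 : (bdryR _ u) [Sum.inr i] = 0 := by rw [hc]; rfl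
    rw [hbu] at h0
    simp only [Finsupp.finset_sum_apply, Finsupp.add_apply, Finsupp.smul_apply,
      Finsupp.sub_apply, Finsupp.single_apply, smul_eq_mul] at h0
    simp only [List.cons.injEq, Sum.inr.injEq, and_true, reduceCtorEq, if_false,
      false_and, if_neg, sub_zero, zero_sub, mul_ite, mul_one, mul_zero, mul_neg,
      Finset.sum_add_distrib, Finset.sum_ite_eq', Finset.mem_univ, if_true] at h0
    simp [Finset.sum_neg_distrib, Finset.sum_ite_eq'] at h0
    linarith
  have hsum : ∑ i : Fin k, a i = 0 := by
    have h0 : (bdryR _ u) [S k] = 0 := by rw [hc]; rfl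
    rw [hbu] at h0
    simp only [Finsupp.finset_sum_apply, Finsupp.add_apply, Finsupp.smul_apply,
      Finsupp.sub_apply, Finsupp.single_apply, smul_eq_mul] at h0
    simp only [List.cons.injEq, reduceCtorEq, if_false, false_and, if_neg,
      sub_zero, zero_sub, mul_neg, mul_zero, mul_one, add_zero,
      Finset.sum_neg_distrib] at h0
    simp [Finset.sum_add_distrib, Finset.sum_neg_distrib] at h0
    linarith [h0]
  have hbv : bdryR _ (∑ i : Fin k, Finsupp.single [S k, Sum.inr i, E k] (a i))
      = ∑ i : Fin k, a i • (Finsupp.single [Sum.inr i, E k] 1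
        - Finsupp.single [S k, E k] 1 + Finsupp.single [S k, Sum.inr i] 1) := by
    rw [map_sum]
    exact Finset.sum_congr rfl fun i _ => by rw [bdry_single, D_three]
  have hveq : bdryR _ (∑ i : Fin k, Finsupp.single [S k, Sum.inr i, E k] (a i)) = u := by
    rw [hbv]
    calc ∑ i : Fin k, a i • (Finsupp.single [Sum.inr i, E k] 1
          - Finsupp.single [S k, E k] 1 + Finsupp.single [S k, Sum.inr i] 1)
        = ∑ i : Fin k, ((Finsupp.single [S k, Sum.inr i] (a i)
            + Finsupp.single [Sum.inr i, E k] (b i)) - a i • Finsupp.single [S k, E k] 1) := by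
          refine Finset.sum_congr rfl fun i _ => ?_
          rw [hab i, ← Finsupp.smul_single_one [S k, Sum.inr i] (a i),
            ← Finsupp.smul_single_one [Sum.inr i, E k] (a i)]
          module
      _ = (∑ i : Fin k, (Finsupp.single [S k, Sum.inr i] (a i)
            + Finsupp.single [Sum.inr i, E k] (b i)))
            - (∑ i : Fin k, a i) • Finsupp.single [S k, E k] 1 := by
          rw [Finset.sum_sub_distrib, Finset.sum_smul]
      _ = u := by rw [hsum, zero_smul, sub_zero, ← hrepr]
  refine ⟨∑ i : Fin k, Finsupp.single [S k, Sum.inr i, E k] (a i), ⟨?_, ?_⟩, hveq⟩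
  · intro l hl
    obtain ⟨i, _, hi⟩ := Finsupp.mem_support_finset_sum l hl
    have : l = [S k, Sum.inr i, E k] := by
      have := Finsupp.support_single_subset hi
      simpa using this
    subst this
    refine ⟨rfl, ?_, ?_⟩
    · refine List.isChain_cons_cons.mpr ⟨Or.inl ⟨rfl, i, rfl⟩, ?_⟩
      refine List.isChain_cons_cons.mpr ⟨Or.inr ⟨⟨i, rfl⟩, rfl⟩, List.isChain_singleton _⟩
    · simp [S, E]
  · rw [hveq]
    exact hu.1

lemma part_H2 (u : List (Bool ⊕ Fin k) →₀ ℝ) (hu : IsAR (skAdj k) 2 u)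
    (hc : bdryR _ u = 0) : u = 0 := by
  classical
  set g : Fin k → ℝ := fun i => u [S k, Sum.inr i, E k] with hg
  have hrepr : u = ∑ i : Fin k, Finsupp.single [S k, Sum.inr i, E k] (g i) := repr2 u hu
  have hbu : bdryR _ u = ∑ i : Fin k, g i • (Finsupp.single [Sum.inr i, E k] 1
      - Finsupp.single [S k, E k] 1 + Finsupp.single [S k, Sum.inr i] 1) := by
    conv_lhs => rw [hrepr]
    rw [map_sum]
    exact Finset.sum_congr rfl fun i _ => by rw [bdry_single, D_three]
  have hzero : ∀ i, g i = 0 := by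
    intro i
    have h0 : (bdryR _ u) [S k, Sum.inr i] = 0 := by rw [hc]; rfl
    rw [hbu] at h0
    simp only [Finsupp.finset_sum_apply, Finsupp.add_apply, Finsupp.smul_apply,
      Finsupp.sub_apply, Finsupp.single_apply, smul_eq_mul, List.cons.injEq,
      Sum.inr.injEq, reduceCtorEq, false_and, and_true, true_and, if_false, if_neg,
      sub_zero, zero_sub, zero_add, mul_ite, mul_one, mul_zero, mul_neg, neg_zero,
      Finset.sum_ite_eq', Finset.mem_univ, if_true] at h0
    simpa using h0
  rw [hrepr]
  simp [hzero]

lemma A_big (n : ℕ) (hn : 3 ≤ n) (u : List (Bool ⊕ Fin k) →₀ ℝ)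
    (hu : IsAR (skAdj k) n u) : u = 0 := by
  rw [← Finsupp.support_eq_empty, Finset.eq_empty_iff_forall_notMem]
  intro l hl
  obtain ⟨hlen, hch, _⟩ := hu l hl
  exact chain_big (by omega) hch

lemma omega0_u0 : IsOmegaR (skAdj k) 0 (Finsupp.single [S k] (1:ℝ)) := by
  constructor
  · intro l hl
    have := Finsupp.support_single_subset hl
    simp only [Finset.mem_singleton] at this
    subst this
    exact ⟨rfl, List.isChain_singleton _, List.nodup_singleton _⟩
  · rw [bdry_single, D_one, smul_zero]
    exact isAR_zero _ _

lemma eps_bdry1 (v : List (Bool ⊕ Fin k) →₀ ℝ) (hv : IsAR (skAdj k) 1 v) :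
    eps _ (bdryR _ v) = 0 := by
  rw [repr1 v hv, map_sum, map_sum]
  simp [map_add, bdry_single, D_two, eps_single]


lemma part_H0_surj (hk : 3 ≤ k) (u : List (Bool ⊕ Fin k) →₀ ℝ)
    (hu : IsOmegaR (skAdj k) 0 u) :
    ∃ (c : ℝ) (v : List (Bool ⊕ Fin k) →₀ ℝ),
      IsOmegaR (skAdj k) 1 v ∧ u = c • Finsupp.single [S k] (1:ℝ) + bdryR _ v := by
  classical
  have hk0 : 0 < k := by omega
  set i0 : Fin k := ⟨0, hk0⟩ with hi0
  set c : ℝ := u [S k] + u [E k] + ∑ i : Fin k, u [Sum.inr i] with hcdef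
  set v : List (Bool ⊕ Fin k) →₀ ℝ :=
    (∑ i : Fin k, Finsupp.single [S k, Sum.inr i] (u [Sum.inr i]))
      + Finsupp.single [S k, Sum.inr i0] (u [E k])
      + Finsupp.single [Sum.inr i0, E k] (u [E k]) with hvdef
  have hbv : bdryR _ v
      = (∑ i : Fin k, u [Sum.inr i] • (Finsupp.single [Sum.inr i] 1 - Finsupp.single [S k] 1))
        + u [E k] • (Finsupp.single [Sum.inr i0] 1 - Finsupp.single [S k] 1)
        + u [E k] • (Finsupp.single [E k] 1 - Finsupp.single [Sum.inr i0] 1) := by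
    rw [hvdef, map_add, map_add, map_sum, bdry_single, bdry_single, D_two, D_two]
    congr 2
    exact Finset.sum_congr rfl fun i _ => by rw [bdry_single, D_two]
  have hsum1 : ∑ i : Fin k, u [Sum.inr i] • (Finsupp.single [Sum.inr i] (1:ℝ)
        - Finsupp.single [S k] 1)
      = (∑ i : Fin k, u [Sum.inr i] • Finsupp.single [Sum.inr i] (1:ℝ))
        - (∑ i : Fin k, u [Sum.inr i]) • Finsupp.single [S k] (1:ℝ) := by
    rw [Finset.sum_smul]
    rw [← Finset.sum_sub_distrib]
    exact Finset.sum_congr rfl fun i _ => smul_sub _ _ _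
  have heq : u = c • Finsupp.single [S k] (1:ℝ) + bdryR _ v := by
    rw [hbv, hsum1]
    conv_lhs => rw [repr0 u hu.1]
    rw [← Finsupp.smul_single_one [S k] (u [S k]), ← Finsupp.smul_single_one [E k] (u [E k])]
    have hW : ∑ i : Fin k, Finsupp.single ([Sum.inr i] : List (Bool ⊕ Fin k)) (u [Sum.inr i])
        = ∑ i : Fin k, u [Sum.inr i] • Finsupp.single ([Sum.inr i] : List (Bool ⊕ Fin k)) (1:ℝ) :=
      Finset.sum_congr rfl fun i _ => (Finsupp.smul_single_one _ _).symm
    rw [hW, hcdef]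
    module
  refine ⟨c, v, ⟨?_, ?_⟩, heq⟩
  · intro l hl
    have hshape : (∃ i, l = [S k, Sum.inr i]) ∨ l = [Sum.inr i0, E k] := by
      rcases Finset.mem_union.mp (Finsupp.support_add hl) with h | h
      · rcases Finset.mem_union.mp (Finsupp.support_add h) with h' | h'
        · obtain ⟨i, _, hi⟩ := Finsupp.mem_support_finset_sum l h'
          have := Finsupp.support_single_subset hi
          simp only [Finset.mem_singleton] at this
          exact Or.inl ⟨i, this⟩
        · have := Finsupp.support_single_subset h'
          simp only [Finset.mem_singleton] at this
          exact Or.inl ⟨i0, this⟩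
      · have := Finsupp.support_single_subset h
        simp only [Finset.mem_singleton] at this
        exact Or.inr this
    rcases hshape with ⟨i, rfl⟩ | rfl
    · exact ⟨rfl, List.isChain_cons_cons.mpr ⟨Or.inl ⟨rfl, i, rfl⟩, List.isChain_singleton _⟩,
        by simp [S]⟩
    · exact ⟨rfl, List.isChain_cons_cons.mpr ⟨Or.inr ⟨⟨i0, rfl⟩, rfl⟩, List.isChain_singleton _⟩,
        by simp [E]⟩
  · have hsub : bdryR _ v = u - c • Finsupp.single [S k] (1:ℝ) := by
      rw [heq]; abel
    rw [hsub]
    exact IsAR.sub hu.1 (IsAR.smul c omega0_u0.1)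

end SK


/-- For `k ≥ 3`, the real path homology of `S_k` is `H₀ ≅ ℝ` (there is a class `u₀` whose
multiples give every 0-cycle modulo boundaries, and which is not a boundary) and `H_n = 0` for
all `n ≥ 1` (every `n`-cycle in `Ω_n` is the boundary of an element of `Ω_{n+1}`). -/
theorem sk_path_homology (k : ℕ) (hk : 3 ≤ k) :
    (∃ u₀ : List (Bool ⊕ Fin k) →₀ ℝ,
      IsOmegaR (skAdj k) 0 u₀ ∧
      (∀ u, IsOmegaR (skAdj k) 0 u → bdryR _ u = 0 →
        ∃ (c : ℝ) (v : List (Bool ⊕ Fin k) →₀ ℝ),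
          IsOmegaR (skAdj k) 1 v ∧ u = c • u₀ + bdryR _ v) ∧
      (∀ (c : ℝ) (v : List (Bool ⊕ Fin k) →₀ ℝ),
        IsOmegaR (skAdj k) 1 v → c • u₀ = bdryR _ v → c = 0)) ∧
    (∀ n, 1 ≤ n → ∀ u : List (Bool ⊕ Fin k) →₀ ℝ,
      IsOmegaR (skAdj k) n u → bdryR _ u = 0 →
        ∃ v, IsOmegaR (skAdj k) (n + 1) v ∧ bdryR _ v = u) := by
  constructor
  · refine ⟨Finsupp.single [SK.S k] (1:ℝ), SK.omega0_u0, ?_, ?_⟩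
    · intro u hu _
      exact SK.part_H0_surj hk u hu
    · intro c v hv h
      have h2 := congrArg (SK.eps _) h
      rw [map_smul, SK.eps_single, smul_eq_mul, mul_one, SK.eps_bdry1 v hv.1] at h2
      exact h2
  · intro n hn u hu hc
    rcases eq_or_lt_of_le hn with h1 | h2
    · subst h1
      exact SK.part_H1 u hu hc
    · have hu0 : u = 0 := by
        rcases eq_or_lt_of_le (show 2 ≤ n from h2) with h3 | h4
        · cases h3
          exact SK.part_H2 u hu.1 hc
        · exact SK.A_big n (by omega) u hu.1
      exact ⟨0, ⟨SK.isAR_zero _ _, by rw [map_zero]; exact SK.isAR_zero _ _⟩,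
        by rw [map_zero, hu0]⟩
end

section
/- Let G be the exotic cube: the digraph with vertices {0,1,…,8} and edges 0→1, 0→2, 0→3, 0→4, 1→5, 1→8, 2→5, 2→6, 3→6, 3→7, 4→7, 4→8, 5→8, 6→8, 7→8. Then P = e_{0158} − e_{0258} + e_{0268} − e_{0368} + e_{0378} − e_{0478} lies in Ω_3(G;ℤ) and is a minimal 3-path whose supporting digraph is all of G; in particular |V(Supp(P))| = 9 > 8 = |V(I^{⊡3})|, so there is no digraph map f: I^{⊡3} → G with image equal to G, hence (P, Supp(P)) is not admissible. -/
/-- The width `w(P) = Σ_p |c_p|` of a path `P = Σ_p c_p e_p`. -/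
def width {V : Type*} (u : List V →₀ ℤ) : ℤ :=
  ∑ l ∈ u.support, |u l|

/-- `P' < P`: `P'` is a nonzero element of `Ω_n(G;ℤ)` with `|c_p − d_p| ≤ |c_p|` and
`|d_p| ≤ |c_p|` for every elementary path `p`, and strictly smaller width. -/
def Smaller {V : Type*} (adj : V → V → Prop) (n : ℕ) (u' u : List V →₀ ℤ) : Prop :=
  IsOmega adj n u' ∧ u' ≠ 0 ∧
    (∀ l, |u l - u' l| ≤ |u l| ∧ |u' l| ≤ |u l|) ∧ width u' < width u

/-- `P` is a minimal `n`-path: `P ∈ Ω_n(G;ℤ)` and no `P' ∈ Ω_n(G;ℤ)` is smaller than `P`. -/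
def MinimalPath {V : Type*} (adj : V → V → Prop) (n : ℕ) (u : List V →₀ ℤ) : Prop :=
  IsOmega adj n u ∧ ¬ ∃ u', Smaller adj n u' u
open Classical

/-- The exotic cube: the digraph on `{0,…,8}` with edges `0→1, 0→2, 0→3, 0→4, 1→5, 1→8,
2→5, 2→6, 3→6, 3→7, 4→7, 4→8, 5→8, 6→8, 7→8`. -/
def exoticAdj : Fin 9 → Fin 9 → Prop := fun a b =>
  (a, b) ∈ ({(0, 1), (0, 2), (0, 3), (0, 4), (1, 5), (1, 8), (2, 5), (2, 6), (3, 6), (3, 7),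
      (4, 7), (4, 8), (5, 8), (6, 8), (7, 8)} : Set (Fin 9 × Fin 9))

/-- `P = e₀₁₅₈ − e₀₂₅₈ + e₀₂₆₈ − e₀₃₆₈ + e₀₃₇₈ − e₀₄₇₈` in the exotic cube. -/
noncomputable def exoticP : List (Fin 9) →₀ ℤ :=
  Finsupp.single [0, 1, 5, 8] (1 : ℤ) - Finsupp.single [0, 2, 5, 8] (1 : ℤ) +
    Finsupp.single [0, 2, 6, 8] (1 : ℤ) - Finsupp.single [0, 3, 6, 8] (1 : ℤ) +
    Finsupp.single [0, 3, 7, 8] (1 : ℤ) - Finsupp.single [0, 4, 7, 8] (1 : ℤ)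

set_option maxHeartbeats 2000000

lemma bdry_single4 {V : Type*} (a b c d : V) :
    bdry V (Finsupp.single [a,b,c,d] (1:ℤ)) =
      Finsupp.single [b,c,d] 1 - Finsupp.single [a,c,d] 1 + Finsupp.single [a,b,d] 1
        - Finsupp.single [a,b,c] 1 := by
  simp [bdry, Finset.sum_range_succ, List.eraseIdx]
  abel

lemma bdryP : bdry (Fin 9) exoticP =
    Finsupp.single [1,5,8] 1 + Finsupp.single [0,1,8] 1 - Finsupp.single [0,1,5] 1
      - Finsupp.single [2,5,8] 1 + Finsupp.single [0,2,5] 1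
      + Finsupp.single [2,6,8] 1 - Finsupp.single [0,2,6] 1
      - Finsupp.single [3,6,8] 1 + Finsupp.single [0,3,6] 1
      + Finsupp.single [3,7,8] 1 - Finsupp.single [0,3,7] 1
      - Finsupp.single [4,7,8] 1 - Finsupp.single [0,4,8] 1 + Finsupp.single [0,4,7] 1 := by
  rw [exoticP]
  simp only [map_add, map_sub, bdry_single4]
  abel

lemma hPsupp : ∀ l : List (Fin 9), exoticP l ≠ 0 →
    l = [0,1,5,8] ∨ l = [0,2,5,8] ∨ l = [0,2,6,8] ∨ l = [0,3,6,8] ∨ l = [0,3,7,8] ∨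
      l = [0,4,7,8] := by
  intro l h
  by_contra hc
  push_neg at hc
  obtain ⟨h1, h2, h3, h4, h5, h6⟩ := hc
  apply h
  rw [exoticP]
  simp [Finsupp.single_apply, Ne.symm h1, Ne.symm h2, Ne.symm h3, Ne.symm h4, Ne.symm h5,
    Ne.symm h6]


lemma hBsupp : ∀ l : List (Fin 9), bdry (Fin 9) exoticP l ≠ 0 →
    l = [1,5,8] ∨ l = [0,1,8] ∨ l = [0,1,5] ∨ l = [2,5,8] ∨ l = [0,2,5] ∨ l = [2,6,8] ∨
    l = [0,2,6] ∨ l = [3,6,8] ∨ l = [0,3,6] ∨ l = [3,7,8] ∨ l = [0,3,7] ∨ l = [4,7,8] ∨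
    l = [0,4,8] ∨ l = [0,4,7] := by
  intro l h
  by_contra hc
  push_neg at hc
  obtain ⟨h1, h2, h3, h4, h5, h6, h7, h8, h9, h10, h11, h12, h13, h14⟩ := hc
  apply h
  rw [bdryP]
  simp [Finsupp.single_apply, Ne.symm h1, Ne.symm h2, Ne.symm h3, Ne.symm h4, Ne.symm h5,
    Ne.symm h6, Ne.symm h7, Ne.symm h8, Ne.symm h9, Ne.symm h10, Ne.symm h11, Ne.symm h12,
    Ne.symm h13, Ne.symm h14]

lemma hOmegaP : IsOmega exoticAdj 3 exoticP := by
  constructor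
  · intro l hl
    rcases hPsupp l (Finsupp.mem_support_iff.mp hl) with h|h|h|h|h|h <;> subst h <;>
      exact ⟨rfl, by simp [List.Chain', exoticAdj], by decide⟩
  · intro l hl
    rcases hBsupp l (Finsupp.mem_support_iff.mp hl) with
      h|h|h|h|h|h|h|h|h|h|h|h|h|h <;> subst h <;>
      exact ⟨rfl, by simp [List.Chain', exoticAdj], by decide⟩

example : True := trivial

/-- In the exotic cube `G`: `P = e₀₁₅₈ − e₀₂₅₈ + e₀₂₆₈ − e₀₃₆₈ + e₀₃₇₈ − e₀₄₇₈` lies in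
`Ω₃(G;ℤ)` and is a minimal 3-path; its supporting digraph is all of `G` (no proper
sub-digraph carries `P`); there is no digraph map `f : I^{⊡3} → G` whose image contains all
9 vertices (since `I^{⊡3}` has only 8); hence `(P, Supp(P))` is not admissible: no digraph
map `f : I^{⊡3} → G` has `f_*(ω₃) = cP` (`c ≠ 0`) with image digraph equal to
`Supp(P) = G`. -/
theorem exotic_cube_not_admissible :
    IsOmega exoticAdj 3 exoticP ∧
    MinimalPath exoticAdj 3 exoticP ∧
    (∀ adj' : Fin 9 → Fin 9 → Prop,
      (∀ a b, adj' a b → exoticAdj a b) → IsOmega adj' 3 exoticP → adj' = exoticAdj) ∧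
    (¬ ∃ f : (Fin 3 → Bool) → Fin 9,
      IsDigraphMap cubeAdj exoticAdj f ∧ Set.range f = Set.univ) ∧
    (¬ ∃ (f : (Fin 3 → Bool) → Fin 9) (c : ℤ),
      c ≠ 0 ∧ IsDigraphMap cubeAdj exoticAdj f ∧ fstar f (stdOmega 3) = c • exoticP ∧
      Set.range f = Set.univ ∧
      (∀ a b, exoticAdj a b ↔ ∃ x y, cubeAdj x y ∧ f x = a ∧ f y = b ∧ a ≠ b)) := by
  have h4 : ¬ ∃ f : (Fin 3 → Bool) → Fin 9,
      IsDigraphMap cubeAdj exoticAdj f ∧ Set.range f = Set.univ := by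
    rintro ⟨f, -, hr⟩
    have hs : Function.Surjective f := Set.range_eq_univ.mp hr
    have h9 := Fintype.card_le_of_surjective f hs
    simp at h9
  refine ⟨hOmegaP, ⟨hOmegaP, ?_⟩, ?_, h4, ?_⟩
  · -- minimality
    rintro ⟨u', ⟨hA, hdA⟩, hne, hbound, hwidth⟩
    have hzero : ∀ l : List (Fin 9), l ≠ [0,1,5,8] → l ≠ [0,2,5,8] → l ≠ [0,2,6,8] →
        l ≠ [0,3,6,8] → l ≠ [0,3,7,8] → l ≠ [0,4,7,8] → u' l = 0 := by
      intro l h1 h2 h3 h4 h5 h6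
      have hb := (hbound l).2
      have hp : exoticP l = 0 := by
        by_contra hp
        rcases hPsupp l hp with h|h|h|h|h|h <;> simp_all
      rw [hp] at hb
      simpa using hb
    have hu'eq : u' = u' [0,1,5,8] • Finsupp.single [0,1,5,8] (1:ℤ)
        + u' [0,2,5,8] • Finsupp.single [0,2,5,8] 1
        + u' [0,2,6,8] • Finsupp.single [0,2,6,8] 1
        + u' [0,3,6,8] • Finsupp.single [0,3,6,8] 1
        + u' [0,3,7,8] • Finsupp.single [0,3,7,8] 1
        + u' [0,4,7,8] • Finsupp.single [0,4,7,8] 1 := by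
      ext l
      by_cases h1 : l = [0,1,5,8]
      · subst h1; simp [Finsupp.single_apply]
      by_cases h2 : l = [0,2,5,8]
      · subst h2; simp [Finsupp.single_apply]
      by_cases h3 : l = [0,2,6,8]
      · subst h3; simp [Finsupp.single_apply]
      by_cases h4 : l = [0,3,6,8]
      · subst h4; simp [Finsupp.single_apply]
      by_cases h5 : l = [0,3,7,8]
      · subst h5; simp [Finsupp.single_apply]
      by_cases h6 : l = [0,4,7,8]
      · subst h6; simp [Finsupp.single_apply]
      simp [Finsupp.single_apply, Ne.symm h1, Ne.symm h2, Ne.symm h3, Ne.symm h4,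
        Ne.symm h5, Ne.symm h6, hzero l h1 h2 h3 h4 h5 h6]
    have key : ∀ l : List (Fin 9), ¬ l.Chain' exoticAdj → bdry (Fin 9) u' l = 0 := by
      intro l hc
      by_contra h
      exact hc ((hdA l (Finsupp.mem_support_iff.mpr h)).2.1)
    have e1 : u' [0,1,5,8] + u' [0,2,5,8] = 0 := by
      have h := key [0,5,8] (by simp [List.Chain', exoticAdj])
      rw [hu'eq] at h
      simp only [map_add, map_smul, bdry_single4] at h
      simp [Finsupp.single_apply] at h
      omega
    have e2 : u' [0,2,5,8] + u' [0,2,6,8] = 0 := by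
      have h := key [0,2,8] (by simp [List.Chain', exoticAdj])
      rw [hu'eq] at h
      simp only [map_add, map_smul, bdry_single4] at h
      simp [Finsupp.single_apply] at h
      omega
    have e3 : u' [0,2,6,8] + u' [0,3,6,8] = 0 := by
      have h := key [0,6,8] (by simp [List.Chain', exoticAdj])
      rw [hu'eq] at h
      simp only [map_add, map_smul, bdry_single4] at h
      simp [Finsupp.single_apply] at h
      omega
    have e4 : u' [0,3,6,8] + u' [0,3,7,8] = 0 := by
      have h := key [0,3,8] (by simp [List.Chain', exoticAdj])
      rw [hu'eq] at h
      simp only [map_add, map_smul, bdry_single4] at h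
      simp [Finsupp.single_apply] at h
      omega
    have e5 : u' [0,3,7,8] + u' [0,4,7,8] = 0 := by
      have h := key [0,7,8] (by simp [List.Chain', exoticAdj])
      rw [hu'eq] at h
      simp only [map_add, map_smul, bdry_single4] at h
      simp [Finsupp.single_apply] at h
      omega
    have b1 := hbound [0,1,5,8]
    have hP1 : exoticP [0,1,5,8] = 1 := by rw [exoticP]; simp [Finsupp.single_apply]
    rw [hP1, abs_one, abs_le, abs_le] at b1
    have hd : u' [0,1,5,8] = 0 ∨ u' [0,1,5,8] = 1 := by omega
    rcases hd with hd | hd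
    · apply hne
      have h2 : u' [0,2,5,8] = 0 := by omega
      have h3 : u' [0,2,6,8] = 0 := by omega
      have h4 : u' [0,3,6,8] = 0 := by omega
      have h5 : u' [0,3,7,8] = 0 := by omega
      have h6 : u' [0,4,7,8] = 0 := by omega
      rw [hu'eq, hd, h2, h3, h4, h5, h6]
      simp
    · have h2 : u' [0,2,5,8] = -1 := by omega
      have h3 : u' [0,2,6,8] = 1 := by omega
      have h4 : u' [0,3,6,8] = -1 := by omega
      have h5 : u' [0,3,7,8] = 1 := by omega
      have h6 : u' [0,4,7,8] = -1 := by omega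
      have hueq2 : u' = exoticP := by
        rw [hu'eq, hd, h2, h3, h4, h5, h6, exoticP]
        simp only [one_smul, neg_one_smul]
        abel
      rw [hueq2] at hwidth
      exact absurd hwidth (lt_irrefl _)
  · -- support is all of G
    intro adj' hsub hom
    obtain ⟨hA, hB⟩ := hom
    have m1 : List.Chain' adj' [0,1,5,8] :=
      (hA _ (Finsupp.mem_support_iff.mpr (by rw [exoticP]; simp [Finsupp.single_apply]))).2.1
    have m2 : List.Chain' adj' [0,2,5,8] :=
      (hA _ (Finsupp.mem_support_iff.mpr (by rw [exoticP]; simp [Finsupp.single_apply]))).2.1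
    have m3 : List.Chain' adj' [0,2,6,8] :=
      (hA _ (Finsupp.mem_support_iff.mpr (by rw [exoticP]; simp [Finsupp.single_apply]))).2.1
    have m4 : List.Chain' adj' [0,3,6,8] :=
      (hA _ (Finsupp.mem_support_iff.mpr (by rw [exoticP]; simp [Finsupp.single_apply]))).2.1
    have m5 : List.Chain' adj' [0,3,7,8] :=
      (hA _ (Finsupp.mem_support_iff.mpr (by rw [exoticP]; simp [Finsupp.single_apply]))).2.1
    have m6 : List.Chain' adj' [0,4,7,8] :=
      (hA _ (Finsupp.mem_support_iff.mpr (by rw [exoticP]; simp [Finsupp.single_apply]))).2.1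
    have n1 : List.Chain' adj' [0,1,8] :=
      (hB _ (Finsupp.mem_support_iff.mpr (by rw [bdryP]; simp [Finsupp.single_apply]))).2.1
    have n2 : List.Chain' adj' [0,4,8] :=
      (hB _ (Finsupp.mem_support_iff.mpr (by rw [bdryP]; simp [Finsupp.single_apply]))).2.1
    simp only [List.Chain', List.isChain_cons_cons, List.isChain_singleton, and_true] at m1 m2 m3 m4 m5 m6 n1 n2
    obtain ⟨a01, a15, a58⟩ := m1
    obtain ⟨a02, a25, -⟩ := m2
    obtain ⟨-, a26, a68⟩ := m3
    obtain ⟨a03, a36, -⟩ := m4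
    obtain ⟨-, a37, a78⟩ := m5
    obtain ⟨a04, a47, -⟩ := m6
    obtain ⟨-, a18⟩ := n1
    obtain ⟨-, a48⟩ := n2
    funext a b
    apply propext
    constructor
    · exact hsub a b
    · intro h
      simp only [exoticAdj, Set.mem_insert_iff, Set.mem_singleton_iff, Prod.mk.injEq] at h
      rcases h with ⟨rfl,rfl⟩|⟨rfl,rfl⟩|⟨rfl,rfl⟩|⟨rfl,rfl⟩|⟨rfl,rfl⟩|⟨rfl,rfl⟩|⟨rfl,rfl⟩|
        ⟨rfl,rfl⟩|⟨rfl,rfl⟩|⟨rfl,rfl⟩|⟨rfl,rfl⟩|⟨rfl,rfl⟩|⟨rfl,rfl⟩|⟨rfl,rfl⟩|⟨rfl,rfl⟩ <;>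
        assumption
  · rintro ⟨f, c, -, hmap, -, hr, -⟩
    exact h4 ⟨f, hmap, hr⟩
end
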